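/- Let {X_ℓ, f_ℓ} and {Y_ℓ, g_ℓ} be inverse sequences of compact metric spaces with surjective continuous bonding functions, let (n_ℓ) and (m_ℓ) be sequences of positive integers with m_{k+1} ≥ m_k, n_{k+1} > n_k, and m_k ≥ n_k for each k, and let (H_ℓ) be a sequence of upper semicontinuous set-valued functions H_ℓ : X_{m_ℓ} ⊸ Y_{n_ℓ} such that: (a) for each positive integer k, each j ∈ {1, …, n_k}, each positive integer r > k and each x ∈ X_{m_r}, g_{j,n_r}(H_r(x)) ⊆ g_{j,n_k}(H_k(f_{m_k,m_r}(x))); and (b) for each positive integer j and each x ∈ varprojlim{X_ℓ, f_ℓ}, lim_{k→∞} diam(g_{j,n_k}(H_k(p_{m_k}(x)))) = 0. Then there is a continuous function g : varprojlim{X_ℓ, f_ℓ} → varprojlim{Y_ℓ, g_ℓ} such that for each positive integer k, each j ∈ {1, …, n_k}, and each x ∈ varprojlim{X_ℓ, f_ℓ}, q_j(g(x)) ∈ g_{j,n_k}(H_k(p_{m_k}(x))). -/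
import Mathlib


open Metric Filter Set Function

/-- The inverse limit of an inverse sequence `{X n, f n}` of spaces with
single-valued bonding maps `f n : X (n+1) → X n`. -/
def invLim (X : ℕ → Type*) (f : ∀ n, X (n + 1) → X n) : Set (∀ n, X n) :=
  {x | ∀ n, x n = f n (x (n + 1))}

/-- The composite bonding map `f_{n,m} : X m → X n` for `n ≤ m`. -/
def bondMap {X : ℕ → Type*} (f : ∀ n, X (n + 1) → X n) {n m : ℕ} (h : n ≤ m) :
    X m → X n :=
  Nat.leRecOn (C := fun k => X k → X n) h (fun {k} g => g ∘ f k) id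

/-- A set-valued function is upper semicontinuous (with nonempty closed values):
all of its values are nonempty closed sets and its graph is closed. -/
def IsUSC {A B : Type*} [TopologicalSpace A] [TopologicalSpace B] (F : A → Set B) : Prop :=
  (∀ a, (F a).Nonempty) ∧ (∀ a, IsClosed (F a)) ∧ IsClosed {p : A × B | p.2 ∈ F p.1}

/-- The `T_{n,m}` transformation of a map between inverse limits:
`T_{n,m}(g)(x) = q_n (g (p_m ⁻¹ x))`. -/
def Ttrans {X Y : ℕ → Type*} {f : ∀ n, X (n + 1) → X n} {gs : ∀ n, Y (n + 1) → Y n}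
    (g : ↥(invLim X f) → ↥(invLim Y gs)) (n m : ℕ) (x : X m) : Set (Y n) :=
  {y | ∃ z : ↥(invLim X f), z.1 m = x ∧ (g z).1 n = y}

/-- A space has the fixed point property if every continuous self-map has a fixed point. -/
def HasFPP (Z : Type*) [TopologicalSpace Z] : Prop :=
  ∀ g : Z → Z, Continuous g → ∃ p, g p = p

theorem bondMap_self {X : ℕ → Type*} (f : ∀ n, X (n + 1) → X n) {n : ℕ} (h : n ≤ n) :
    bondMap f h = id := Nat.leRecOn_self (C := fun k => X k → X n) id

theorem bondMap_succ {X : ℕ → Type*} (f : ∀ n, X (n + 1) → X n) {n m : ℕ} (h : n ≤ m)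
    (h2 : n ≤ m + 1) : bondMap f h2 = bondMap f h ∘ f m := by
  unfold bondMap; exact Nat.leRecOn_succ (C := fun k => X k → X n) h (id : X n → X n)

theorem bondMap_comp {X : ℕ → Type*} (f : ∀ n, X (n + 1) → X n) {n m p : ℕ}
    (h1 : n ≤ m) (h2 : m ≤ p) :
    bondMap f (h1.trans h2) = bondMap f h1 ∘ bondMap f h2 := by
  induction p, h2 using Nat.le_induction with
  | base => rw [bondMap_self f le_rfl]; rfl
  | succ p hp ih =>
      rw [bondMap_succ f (h1.trans hp) (h1.trans (hp.trans p.le_succ)),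
        bondMap_succ f hp (hp.trans p.le_succ), ih]
      rfl

theorem invLim_bond {X : ℕ → Type*} (f : ∀ n, X (n + 1) → X n) {z : ∀ n, X n}
    (hz : z ∈ invLim X f) {n m : ℕ} (h : n ≤ m) : bondMap f h (z m) = z n := by
  induction m, h using Nat.le_induction with
  | base => rw [bondMap_self f le_rfl]; rfl
  | succ m hm ih =>
      rw [bondMap_succ f hm (hm.trans m.le_succ)]
      simp only [comp_apply]
      rw [← hz m]; exact ih

theorem bondMap_cont {X : ℕ → Type*} [∀ n, TopologicalSpace (X n)]
    (f : ∀ n, X (n + 1) → X n) (hfc : ∀ n, Continuous (f n)) {n m : ℕ} (h : n ≤ m) :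
    Continuous (bondMap f h) := by
  induction m, h using Nat.le_induction with
  | base => rw [bondMap_self f le_rfl]; exact continuous_id
  | succ m hm ih =>
      rw [bondMap_succ f hm (hm.trans m.le_succ)]
      exact ih.comp (hfc m)

theorem graph_image_closed {A B C : Type*} [TopologicalSpace A] [TopologicalSpace B]
    [TopologicalSpace C] [CompactSpace A] [CompactSpace B] [T2Space A] [T2Space C]
    (H : A → Set B) (hg : IsClosed {p : A × B | p.2 ∈ H p.1}) (φ : B → C)
    (hφ : Continuous φ) : IsClosed {p : A × C | p.2 ∈ φ '' H p.1} := by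
  have heq : {p : A × C | p.2 ∈ φ '' H p.1}
      = (fun q : A × B => (q.1, φ q.2)) '' {p : A × B | p.2 ∈ H p.1} := by
    ext ⟨a, c⟩
    constructor
    · rintro ⟨b, hb, rfl⟩; exact ⟨(a, b), hb, rfl⟩
    · rintro ⟨⟨a', b⟩, hb, heq⟩
      obtain ⟨rfl, rfl⟩ := Prod.mk.injEq .. ▸ heq
      exact ⟨b, hb, rfl⟩
  rw [heq]
  exact (hg.isCompact.image (continuous_fst.prodMk (hφ.comp continuous_snd))).isClosed

theorem usc_subset_eventually {A B : Type*} [TopologicalSpace A] [TopologicalSpace B]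
    [CompactSpace A] [CompactSpace B] [T2Space A] [T2Space B]
    (F : A → Set B) (hg : IsClosed {p : A × B | p.2 ∈ F p.1})
    {x₀ : A} {U : Set B} (hU : IsOpen U) (hFU : F x₀ ⊆ U) :
    ∀ᶠ x in nhds x₀, F x ⊆ U := by
  set C := Prod.fst '' ({p : A × B | p.2 ∈ F p.1} ∩ (univ ×ˢ Uᶜ)) with hC
  have hCc : IsCompact C :=
    (hg.isCompact.inter_right (isClosed_univ.prod hU.isClosed_compl)).image continuous_fst
  have hx₀ : x₀ ∉ C := by
    rintro ⟨⟨a, b⟩, ⟨hb, -, hbU⟩, rfl⟩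
    exact hbU (hFU hb)
  filter_upwards [hCc.isClosed.isOpen_compl.mem_nhds hx₀] with x hx y hy
  by_contra hyU
  exact hx ⟨(x, y), ⟨hy, trivial, hyU⟩, rfl⟩

/-- The decreasing family of candidate sets. -/
def Sset {X Y : ℕ → Type*} (f : ∀ n, X (n + 1) → X n) (gs : ∀ n, Y (n + 1) → Y n)
    (ns ms : ℕ → ℕ) (H : ∀ k, X (ms k) → Set (Y (ns k))) (j k : ℕ)
    (z : ↥(invLim X f)) : Set (Y j) :=
  if hj : j ≤ ns k then bondMap gs hj '' H k (z.1 (ms k)) else Set.univ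

theorem stmt6
    {X Y : ℕ → Type*} [∀ n, MetricSpace (X n)] [∀ n, CompactSpace (X n)]
    [∀ n, MetricSpace (Y n)] [∀ n, CompactSpace (Y n)]
    (f : ∀ n, X (n + 1) → X n) (gs : ∀ n, Y (n + 1) → Y n)
    (hfc : ∀ n, Continuous (f n)) (hfs : ∀ n, Surjective (f n))
    (hgc : ∀ n, Continuous (gs n)) (hgs : ∀ n, Surjective (gs n))
    (ns ms : ℕ → ℕ)
    (hms : ∀ k, ms k ≤ ms (k + 1)) (hns : ∀ k, ns k < ns (k + 1))
    (hnm : ∀ k, ns k ≤ ms k)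
    (H : ∀ k, X (ms k) → Set (Y (ns k))) (hH : ∀ k, IsUSC (H k))
    (ha : ∀ k r : ℕ, k < r → ∀ (hnr : ns k ≤ ns r) (hmr : ms k ≤ ms r),
      ∀ j : ℕ, ∀ hj : j ≤ ns k, ∀ x : X (ms r),
        bondMap gs (hj.trans hnr) '' H r x ⊆
          bondMap gs hj '' H k (bondMap f hmr x))
    (hb : ∀ j : ℕ, ∀ z : ↥(invLim X f),
      Tendsto (fun k =>
          diam (if hj : j ≤ ns k then
            bondMap gs hj '' H k (z.1 (ms k))
          else (∅ : Set (Y j))))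
        atTop (nhds (0 : ℝ))) :
    ∃ g : ↥(invLim X f) → ↥(invLim Y gs), Continuous g ∧
      ∀ k j : ℕ, ∀ hj : j ≤ ns k, ∀ z : ↥(invLim X f),
        (g z).1 j ∈ bondMap gs hj '' H k (z.1 (ms k)) := by
  classical
  have hnsm : StrictMono ns := strictMono_nat_of_lt_succ hns
  have hle : ∀ k, k ≤ ns k := fun k => hnsm.le_apply
  have hSpos : ∀ {j k : ℕ} (hj : j ≤ ns k) (z : ↥(invLim X f)),
      Sset f gs ns ms H j k z = bondMap gs hj '' H k (z.1 (ms k)) :=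
    fun hj _ => dif_pos hj
  have hScomp : ∀ j k z, IsCompact (Sset f gs ns ms H j k z) := by
    intro j k z
    unfold Sset; split
    · exact (((hH k).2.1 _).isCompact).image (bondMap_cont gs hgc _)
    · exact isCompact_univ
  have hSne : ∀ j k z, (Sset f gs ns ms H j k z).Nonempty := by
    intro j k z; unfold Sset; split
    · exact ((hH k).1 _).image _
    · exact ⟨bondMap gs (hle j) ((hH j).1 (z.1 (ms j))).choose, trivial⟩
  have hSanti : ∀ j z, Antitone fun k => Sset f gs ns ms H j k z := by
    intro j z
    refine antitone_nat_of_succ_le fun k => ?_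
    by_cases hj : j ≤ ns k
    · have hj' : j ≤ ns (k + 1) := hj.trans (hns k).le
      show Sset f gs ns ms H j (k + 1) z ⊆ Sset f gs ns ms H j k z
      rw [hSpos hj' z, hSpos hj z]
      have h2 := ha k (k + 1) (Nat.lt_succ_self k) (hns k).le (hms k) j hj (z.1 (ms (k + 1)))
      rw [invLim_bond f z.2 (hms k)] at h2
      exact h2
    · show Sset f gs ns ms H j (k + 1) z ⊆ Sset f gs ns ms H j k z
      rw [show Sset f gs ns ms H j k z = univ from dif_neg hj]
      exact subset_univ _
  have hIne : ∀ j z, (⋂ k, Sset f gs ns ms H j k z).Nonempty := fun j z =>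
    IsCompact.nonempty_iInter_of_sequence_nonempty_isCompact_isClosed _
      (fun k => hSanti j z (Nat.le_succ k)) (fun k => hSne j k z)
      (hScomp j 0 z) (fun k => (hScomp j k z).isClosed)
  have huniq : ∀ (j : ℕ) (z : ↥(invLim X f)) (y y' : Y j),
      y ∈ (⋂ k, Sset f gs ns ms H j k z) → y' ∈ (⋂ k, Sset f gs ns ms H j k z) → y = y' := by
    intro j z y y' hy hy'
    have hev : ∀ᶠ k in atTop, dist y y' ≤
        diam (if hj : j ≤ ns k then bondMap gs hj '' H k (z.1 (ms k))
          else (∅ : Set (Y j))) := by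
      filter_upwards [eventually_ge_atTop j] with k hk
      have hjk : j ≤ ns k := hk.trans (hle k)
      rw [dif_pos hjk]
      have hyk := mem_iInter.1 hy k
      have hyk' := mem_iInter.1 hy' k
      rw [hSpos hjk z] at hyk hyk'
      have hbd : Bornology.IsBounded (bondMap gs hjk '' H k (z.1 (ms k))) :=
        ((((hH k).2.1 _).isCompact).image (bondMap_cont gs hgc hjk)).isBounded
      exact dist_le_diam_of_mem hbd hyk hyk'
    have h0 : dist y y' ≤ 0 := ge_of_tendsto (hb j z) hev
    exact dist_le_zero.1 h0
  choose c hc using hIne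
  have hmemS : ∀ j k z, c j z ∈ Sset f gs ns ms H j k z := fun j k z =>
    mem_iInter.1 (hc j z) k
  have hcons : ∀ j z, gs j (c (j + 1) z) = c j z := by
    intro j z
    refine huniq j z _ _ ?_ (hc j z)
    rw [mem_iInter]
    intro k
    have hj1 : j + 1 ≤ ns (max k (j + 1)) := (le_max_right k (j + 1)).trans (hle _)
    have hj0 : j ≤ ns (max k (j + 1)) := (Nat.le_succ j).trans hj1
    have hmem := hmemS (j + 1) (max k (j + 1)) z
    rw [hSpos hj1 z] at hmem
    obtain ⟨w, hw, hwe⟩ := hmem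
    have hkey : gs j (c (j + 1) z) ∈ Sset f gs ns ms H j (max k (j + 1)) z := by
      rw [hSpos hj0 z]
      refine ⟨w, hw, ?_⟩
      have hstep : bondMap gs hj0 w = gs j (bondMap gs hj1 w) := by
        rw [show bondMap gs hj0 = bondMap gs (Nat.le_succ j) ∘ bondMap gs hj1 from
          bondMap_comp gs (Nat.le_succ j) hj1]
        rw [bondMap_succ gs le_rfl (Nat.le_succ j), bondMap_self gs le_rfl]
        rfl
      rw [hstep, hwe]
    exact hSanti j z (le_max_left k (j + 1)) hkey
  refine ⟨fun z => ⟨fun j => c j z, fun j => (hcons j z).symm⟩, ?_, ?_⟩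
  · apply Continuous.subtype_mk
    apply continuous_pi
    intro j
    rw [continuous_iff_continuousAt]
    intro z₀
    rw [ContinuousAt, Metric.tendsto_nhds]
    intro ε hε
    have hε3 : (0 : ℝ) < ε / 3 := by positivity
    obtain ⟨K, hKd, hKj⟩ :=
      (((hb j z₀).eventually (gt_mem_nhds hε3)).and (eventually_ge_atTop j)).exists
    have hjK : j ≤ ns K := hKj.trans (hle K)
    rw [dif_pos hjK] at hKd
    set A₀ := bondMap gs hjK '' H K (z₀.1 (ms K)) with hA₀
    have hGU : ∀ᶠ x in nhds (z₀.1 (ms K)),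
        bondMap gs hjK '' H K x ⊆ thickening (ε / 3) A₀ :=
      usc_subset_eventually (fun x => bondMap gs hjK '' H K x)
        (graph_image_closed (H K) (hH K).2.2 _ (bondMap_cont gs hgc hjK))
        isOpen_thickening (self_subset_thickening hε3 A₀)
    have hπ : Continuous fun z : ↥(invLim X f) => z.1 (ms K) :=
      (continuous_apply (ms K)).comp continuous_subtype_val
    filter_upwards [(hπ.continuousAt (x := z₀)).eventually hGU] with z hz
    have hmz : c j z ∈ thickening (ε / 3) A₀ := by
      have h1 := hmemS j K z
      rw [hSpos hjK z] at h1
      exact hz h1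
    obtain ⟨a, ha', hda⟩ := mem_thickening_iff.1 hmz
    have hz₀A : c j z₀ ∈ A₀ := by
      have h1 := hmemS j K z₀
      rwa [hSpos hjK z₀] at h1
    have hbd : Bornology.IsBounded A₀ :=
      ((((hH K).2.1 _).isCompact).image (bondMap_cont gs hgc hjK)).isBounded
    have hd2 : dist a (c j z₀) ≤ diam A₀ := dist_le_diam_of_mem hbd ha' hz₀A
    calc dist (c j z) (c j z₀) ≤ dist (c j z) a + dist a (c j z₀) := dist_triangle _ _ _
      _ < ε / 3 + ε / 3 := by linarith
      _ < ε := by linarith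
  · intro k j hj z
    have h1 := hmemS j k z
    rwa [hSpos hj z] at h1
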